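/- Calibration–sharpness decomposition: Let S be a strictly proper scoring rule with induced generalized entropy H, divergence d, and generalized conditional mutual information I. Let X, Y, Q be jointly distributed random variables on a probability space, where X is a feature, Y a target taking values in a measurable space, and Q a random probability measure on the target space (a probabilistic prediction), such that Y and Q are conditionally independent given X. Then the expected score decomposes as E[S(Q,Y)] = E[d(P_{Y|Q}, Q)] + I(Y; X | Q) + E[H(P_{Y|X})], where P_{Y|Q} and P_{Y|X} are regular conditional distributions of Y given Q and given X, respectively. -/

import Mathlib

open MeasureTheory ProbabilityTheory

noncomputable section

/-- Generalized entropy induced by a scoring rule `S`: `H(q) = ∫ S(q,y) dq(y)`. -/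
def gEntropy {𝒴 : Type*} [MeasurableSpace 𝒴] (S : Measure 𝒴 → 𝒴 → ℝ) (q : Measure 𝒴) : ℝ :=
  ∫ y, S q y ∂q

/-- Divergence induced by `S`: `d(p,q) = ∫ S(q,y) dp(y) − H(p)`. -/
def gDiv {𝒴 : Type*} [MeasurableSpace 𝒴] (S : Measure 𝒴 → 𝒴 → ℝ) (p q : Measure 𝒴) : ℝ :=
  ∫ y, S q y ∂p - gEntropy S p

/-- A (negatively oriented) scoring rule is proper if the expected score is minimized by the
true distribution. -/
def IsProper {𝒴 : Type*} [MeasurableSpace 𝒴] (S : Measure 𝒴 → 𝒴 → ℝ) : Prop :=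
  ∀ p q : Measure 𝒴, IsProbabilityMeasure p → IsProbabilityMeasure q →
    ∫ y, S p y ∂p ≤ ∫ y, S q y ∂p

/-- A scoring rule is strictly proper if it is proper and the minimum is uniquely attained at
the true distribution. -/
def IsStrictlyProper {𝒴 : Type*} [MeasurableSpace 𝒴] (S : Measure 𝒴 → 𝒴 → ℝ) : Prop :=
  IsProper S ∧ ∀ p q : Measure 𝒴, IsProbabilityMeasure p → IsProbabilityMeasure q →
    q ≠ p → ∫ y, S p y ∂p < ∫ y, S q y ∂p

/-- Generalized conditional mutual information `I(V; W | Z)` induced by the generalized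
entropy of `S`: the expected reduction of entropy
`E[H(P_{V|Z}) − H(P_{V|(W,Z)})]`, where the regular conditional distributions are given by
`condDistrib`. -/
def gCondMutualInfo {Ω 𝒴 𝒲 𝒵 : Type*} [MeasurableSpace Ω] [MeasurableSpace 𝒴]
    [StandardBorelSpace 𝒴] [Nonempty 𝒴] [MeasurableSpace 𝒲] [MeasurableSpace 𝒵]
    (S : Measure 𝒴 → 𝒴 → ℝ) (μ : Measure Ω) [IsFiniteMeasure μ]
    (V : Ω → 𝒴) (W : Ω → 𝒲) (Z : Ω → 𝒵) : ℝ :=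
  ∫ ω, (gEntropy S (condDistrib V Z μ (Z ω))
      - gEntropy S (condDistrib V (fun ω' => (W ω', Z ω')) μ (W ω, Z ω))) ∂μ

open MeasureTheory ProbabilityTheory MeasurableSpace
open scoped ENNReal

set_option linter.unusedSectionVars false


section AuxConc

variable {Ω : Type*} [MeasurableSpace Ω] [StandardBorelSpace Ω] [Nonempty Ω]
  {β : Type*} [MeasurableSpace β] {μ : Measure Ω} [IsFiniteMeasure μ] {Z : Ω → β}

lemma aux_null_sections (hZ : Measurable Z) {N : Set Ω} (hN : MeasurableSet N) (hN0 : μ N = 0) :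
    ∀ᵐ ω ∂μ, condDistrib id Z μ (Z ω) N = 0 := by
  have h := setLIntegral_preimage_condDistrib (μ := μ) (Y := id) hZ aemeasurable_id hN
    (MeasurableSet.univ (α := β))
  simp only [Set.preimage_univ, Measure.restrict_univ, Set.univ_inter, Set.preimage_id] at h
  rw [hN0] at h
  have hm : AEMeasurable (fun ω => condDistrib id Z μ (Z ω) N) μ :=
    ((Kernel.measurable_coe _ hN).comp hZ).aemeasurable
  have := (lintegral_eq_zero_iff' hm).mp h
  filter_upwards [this] with ω hω using hω

lemma aux_conc_set (hZ : Measurable Z) {s : Set β} (hs : MeasurableSet s) :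
    ∀ᵐ ω ∂μ, condDistrib id Z μ (Z ω) {ω' | Z ω' ∈ s ↔ Z ω ∈ s} = 1 := by
  have h1 : ∀ᵐ ω ∂μ, ω ∈ Z ⁻¹' s → condDistrib id Z μ (Z ω) (Z ⁻¹' sᶜ) = 0 := by
    have h := setLIntegral_preimage_condDistrib (μ := μ) (Y := id) hZ aemeasurable_id
      ((hZ hs.compl).preimage measurable_id) hs
    simp only [Set.preimage_id, Set.preimage_compl] at h
    rw [Set.inter_compl_self, measure_empty] at h
    have hm : AEMeasurable (fun ω => condDistrib id Z μ (Z ω) (Z ⁻¹' sᶜ)) μ :=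
      ((Kernel.measurable_coe _ (hZ hs.compl)).comp hZ).aemeasurable
    have h0 := (setLIntegral_eq_zero_iff' (hZ hs) hm.restrict).mp h
    exact h0
  have h2 : ∀ᵐ ω ∂μ, ω ∈ Z ⁻¹' sᶜ → condDistrib id Z μ (Z ω) (Z ⁻¹' s) = 0 := by
    have h := setLIntegral_preimage_condDistrib (μ := μ) (Y := id) hZ aemeasurable_id
      ((hZ hs).preimage measurable_id) hs.compl
    simp only [Set.preimage_id, Set.preimage_compl] at h
    rw [Set.compl_inter_self, measure_empty] at h
    have hm : AEMeasurable (fun ω => condDistrib id Z μ (Z ω) (Z ⁻¹' s)) μ :=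
      ((Kernel.measurable_coe _ (hZ hs)).comp hZ).aemeasurable
    have h0 := (setLIntegral_eq_zero_iff' (hZ hs).compl hm.restrict).mp h
    exact h0
  filter_upwards [h1, h2] with ω hω1 hω2
  by_cases h : Z ω ∈ s
  · have hset : {ω' | Z ω' ∈ s ↔ Z ω ∈ s} = Z ⁻¹' s := by ext ω'; simp [h]
    rw [hset]
    have : condDistrib id Z μ (Z ω) ((Z ⁻¹' s)ᶜ) = 0 := by
      rw [← Set.preimage_compl]; exact hω1 h
    rwa [prob_compl_eq_zero_iff (hZ hs)] at this
  · have hset : {ω' | Z ω' ∈ s ↔ Z ω ∈ s} = (Z ⁻¹' s)ᶜ := by ext ω'; simp [h]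
    rw [hset]
    rw [prob_compl_eq_one_iff (hZ hs)]
    exact hω2 h

end AuxConc

lemma aux_conc {Ω : Type*} [MeasurableSpace Ω] [StandardBorelSpace Ω] [Nonempty Ω]
    {β : Type*} [MeasurableSpace β] {μ : Measure Ω} [IsFiniteMeasure μ] {Z : Ω → β}
    (hZ : Measurable Z) {ι : Type} [Countable ι] (s : ι → Set β)
    (hs : ∀ i, MeasurableSet (s i)) :
    ∀ᵐ ω ∂μ, condDistrib id Z μ (Z ω) {ω' | ∀ i, Z ω' ∈ s i ↔ Z ω ∈ s i} = 1 := by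
  have h := ae_all_iff.mpr (fun i => aux_conc_set (μ := μ) hZ (hs i))
  filter_upwards [h] with ω hω
  have hset : {ω' | ∀ i, Z ω' ∈ s i ↔ Z ω ∈ s i}
      = ⋂ i, {ω' | Z ω' ∈ s i ↔ Z ω ∈ s i} := by ext ω'; simp
  have hmeas : ∀ i, MeasurableSet {ω' | Z ω' ∈ s i ↔ Z ω ∈ s i} := by
    intro i
    by_cases h : Z ω ∈ s i
    · simp only [h, iff_true]; exact hZ (hs i)
    · simp only [h, iff_false]; exact (hZ (hs i)).compl
  rw [hset, ← prob_compl_eq_zero_iff (MeasurableSet.iInter hmeas), Set.compl_iInter]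
  refine measure_iUnion_null fun i => ?_
  rw [prob_compl_eq_zero_iff (hmeas i)]
  exact hω i

lemma real_eq_of_rat_le_iff {a b : ℝ} (h : ∀ r : ℚ, a ≤ r ↔ b ≤ r) : a = b := by
  by_contra hne
  rcases lt_or_gt_of_ne hne with hlt | hlt
  · obtain ⟨r, h1, h2⟩ := exists_rat_btwn hlt
    exact absurd ((h r).mp h1.le) (not_le.mpr h2)
  · obtain ⟨r, h1, h2⟩ := exists_rat_btwn hlt
    exact absurd ((h r).mpr h1.le) (not_le.mpr h2)

lemma ennreal_eq_of_rat_le_iff {a b : ℝ≥0∞} (ha : a ≠ ⊤) (hb : b ≠ ⊤)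
    (h : ∀ u : ℚ, a ≤ ENNReal.ofReal u ↔ b ≤ ENNReal.ofReal u) : a = b := by
  by_contra hne
  wlog hlt : a < b generalizing a b
  · exact this hb ha (fun u => (h u).symm) (Ne.symm hne)
      (lt_of_le_of_ne (not_lt.mp hlt) (Ne.symm hne))
  have htr : a.toReal < b.toReal := (ENNReal.toReal_lt_toReal ha hb).mpr hlt
  obtain ⟨u, h1, h2⟩ := exists_rat_btwn htr
  have hu0 : (0:ℝ) ≤ u := le_trans ENNReal.toReal_nonneg h1.le
  have hle : a ≤ ENNReal.ofReal u := by
    rw [← ENNReal.ofReal_toReal ha]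
    exact ENNReal.ofReal_le_ofReal h1.le
  have hnle : ¬ b ≤ ENNReal.ofReal u := by
    intro hcon
    have := ENNReal.toReal_mono ENNReal.ofReal_ne_top hcon
    rw [ENNReal.toReal_ofReal hu0] at this
    exact absurd h2 (not_lt.mpr this)
  exact hnle ((h u).mp hle)

section Sep

variable {𝒴 : Type*} [MeasurableSpace 𝒴] [StandardBorelSpace 𝒴] [Nonempty 𝒴]

/-- A countable family of measurable sets on `Measure 𝒴 × 𝒴` separating points with
probability-measure first component. -/
def sepSets (𝒴 : Type*) [MeasurableSpace 𝒴] [StandardBorelSpace 𝒴] [Nonempty 𝒴] :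
    (ℚ × ℚ) ⊕ ℚ → Set (Measure 𝒴 × 𝒴) :=
  Sum.elim
    (fun p => {z | z.1 (embeddingReal 𝒴 ⁻¹' Set.Iic (p.1 : ℝ)) ≤ ENNReal.ofReal p.2})
    (fun r => {z | embeddingReal 𝒴 z.2 ≤ (r : ℝ)})

lemma measurableSet_sepSets (i : (ℚ × ℚ) ⊕ ℚ) : MeasurableSet (sepSets 𝒴 i) := by
  cases i with
  | inl p =>
    exact measurableSet_le ((Measure.measurable_coe
      ((measurableEmbedding_embeddingReal 𝒴).measurable measurableSet_Iic)).comp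
      measurable_fst) measurable_const
  | inr r =>
    exact measurableSet_le ((measurableEmbedding_embeddingReal 𝒴).measurable.comp
      measurable_snd) measurable_const

lemma sepSets_separating {z z' : Measure 𝒴 × 𝒴} (hz : IsProbabilityMeasure z.1)
    (hz' : IsProbabilityMeasure z'.1) (h : ∀ i, z' ∈ sepSets 𝒴 i ↔ z ∈ sepSets 𝒴 i) :
    z' = z := by
  have he := measurableEmbedding_embeddingReal 𝒴
  have h2 : z'.2 = z.2 :=
    he.injective (real_eq_of_rat_le_iff fun r => h (Sum.inr r))
  have hIic : ∀ r : ℚ, z'.1 (embeddingReal 𝒴 ⁻¹' Set.Iic (r : ℝ))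
      = z.1 (embeddingReal 𝒴 ⁻¹' Set.Iic (r : ℝ)) := fun r =>
    ennreal_eq_of_rat_le_iff (measure_ne_top _ _) (measure_ne_top _ _)
      (fun u => h (Sum.inl (r, u)))
  have hmap : z'.1.map (embeddingReal 𝒴) = z.1.map (embeddingReal 𝒴) := by
    haveI := Measure.isProbabilityMeasure_map (μ := z'.1) he.measurable.aemeasurable
    haveI := Measure.isProbabilityMeasure_map (μ := z.1) he.measurable.aemeasurable
    refine ext_of_generate_finite _
      (BorelSpace.measurable_eq.trans Real.borel_eq_generateFrom_Iic_rat)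
      Real.isPiSystem_Iic_rat (fun t ht => ?_) (by simp)
    simp only [Set.mem_iUnion, Set.mem_singleton_iff] at ht
    obtain ⟨r, rfl⟩ := ht
    rw [Measure.map_apply he.measurable measurableSet_Iic,
      Measure.map_apply he.measurable measurableSet_Iic]
    exact hIic r
  have h1 : z'.1 = z.1 := by
    ext A hA
    have hA' := he.measurableSet_image.mpr hA
    calc z'.1 A = z'.1.map (embeddingReal 𝒴) (embeddingReal 𝒴 '' A) := by
          rw [Measure.map_apply he.measurable hA', he.injective.preimage_image]
      _ = z.1.map (embeddingReal 𝒴) (embeddingReal 𝒴 '' A) := by rw [hmap]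
      _ = z.1 A := by
          rw [Measure.map_apply he.measurable hA', he.injective.preimage_image]
  exact Prod.ext h1 h2

end Sep

section Upgrade

variable {Ω : Type*} [MeasurableSpace Ω] [StandardBorelSpace Ω] [Nonempty Ω]
  {𝒴 : Type*} [MeasurableSpace 𝒴] [StandardBorelSpace 𝒴] [Nonempty 𝒴]
  {μ : Measure Ω} [IsFiniteMeasure μ]

lemma aesm_pair_of_comp {Q : Ω → Measure 𝒴} {Y : Ω → 𝒴} (hQ : Measurable Q) (hY : Measurable Y)
    (hQprob : ∀ ω, IsProbabilityMeasure (Q ω)) {f : Measure 𝒴 × 𝒴 → ℝ}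
    (hf : AEStronglyMeasurable (fun ω => f (Q ω, Y ω)) μ) :
    AEStronglyMeasurable f (μ.map (fun ω => (Q ω, Y ω))) := by
  set Z : Ω → Measure 𝒴 × 𝒴 := fun ω => (Q ω, Y ω) with hZdef
  have hZ : Measurable Z := hQ.prodMk hY
  set ν := condDistrib id Z μ with hνdef
  set g : Ω → ℝ := hf.mk _ with hgdef
  have hgm : StronglyMeasurable g := hf.stronglyMeasurable_mk
  have hgg : (fun ω => f (Z ω)) =ᵐ[μ] g := hf.ae_eq_mk
  set N := toMeasurable μ {ω | ¬ f (Z ω) = g ω} with hNdef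
  have hNm : MeasurableSet N := measurableSet_toMeasurable μ _
  have hN0 : μ N = 0 := by rw [measure_toMeasurable]; exact ae_iff.mp hgg
  set E : Set ((Measure 𝒴 × 𝒴) × Ω) :=
    ⋂ i, (sepSets 𝒴 i ×ˢ (Z ⁻¹' sepSets 𝒴 i)) ∪ ((sepSets 𝒴 i)ᶜ ×ˢ (Z ⁻¹' sepSets 𝒴 i)ᶜ)
    with hEdef
  have hEm : MeasurableSet E := MeasurableSet.iInter fun i =>
    ((measurableSet_sepSets i).prod (hZ (measurableSet_sepSets i))).union
      ((measurableSet_sepSets i).compl.prod (hZ (measurableSet_sepSets i)).compl)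
  have hE_mem : ∀ (z : Measure 𝒴 × 𝒴) (ω' : Ω),
      ((z, ω') ∈ E ↔ ∀ i, Z ω' ∈ sepSets 𝒴 i ↔ z ∈ sepSets 𝒴 i) := by
    intro z ω'
    simp only [hEdef, Set.mem_iInter, Set.mem_union, Set.mem_prod, Set.mem_compl_iff,
      Set.mem_preimage]
    exact forall_congr' fun i => by tauto
  set F : Measure 𝒴 × 𝒴 → ℝ := fun z => ∫ ω', g ω' ∂ν z with hFdef
  have hF : AEStronglyMeasurable F (μ.map Z) := by
    have h1 : AEStronglyMeasurable (fun p : (Measure 𝒴 × 𝒴) × Ω => g p.2)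
        (μ.map fun ω => (Z ω, ω)) := hgm.aestronglyMeasurable.comp_snd_map_prodMk Z
    exact h1.integral_condDistrib_map aemeasurable_id
  set G : Set (Measure 𝒴 × 𝒴) :=
    ({z | ν z N = 0} ∩ {z | ν z (Prod.mk z ⁻¹' E) = 1}) ∩ {z | z.1 Set.univ = 1} with hGdef
  have hGm : MeasurableSet G := by
    refine MeasurableSet.inter (MeasurableSet.inter ?_ ?_) ?_
    · exact (Kernel.measurable_coe ν hNm) (measurableSet_singleton 0)
    · exact (Kernel.measurable_kernel_prodMk_left hEm) (measurableSet_singleton 1)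
    · exact ((Measure.measurable_coe MeasurableSet.univ).comp measurable_fst)
        (measurableSet_singleton 1)
  have hG1 : ∀ᵐ ω ∂μ, Z ω ∈ G := by
    filter_upwards [aux_null_sections hZ hNm hN0,
      aux_conc hZ (sepSets 𝒴) measurableSet_sepSets] with ω h1 h2
    refine ⟨⟨h1, ?_⟩, (hQprob ω).measure_univ⟩
    have hpre : Prod.mk (Z ω) ⁻¹' E = {ω' | ∀ i, Z ω' ∈ sepSets 𝒴 i ↔ Z ω ∈ sepSets 𝒴 i} := by
      ext ω'; exact hE_mem (Z ω) ω'
    show ν (Z ω) (Prod.mk (Z ω) ⁻¹' E) = 1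
    rw [hpre]; exact h2
  have hfF : ∀ z ∈ G, f z = F z := by
    rintro z ⟨⟨hzN, hzE⟩, hzP⟩
    haveI hzprob : IsProbabilityMeasure z.1 := ⟨hzP⟩
    have hmem1 : ∀ᵐ ω' ∂ν z, ω' ∉ N := by
      rw [ae_iff]; simpa using hzN
    have hmem2 : ∀ᵐ ω' ∂ν z, ω' ∈ Prod.mk z ⁻¹' E := by
      refine mem_ae_iff.mpr ?_
      exact (prob_compl_eq_zero_iff (measurable_prodMk_left hEm)).mpr hzE
    have hconst : ∀ᵐ ω' ∂ν z, g ω' = f z := by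
      filter_upwards [hmem1, hmem2] with ω' h1 h2
      have hZω' : Z ω' = z := sepSets_separating hzprob (hQprob ω') ((hE_mem z ω').mp h2)
      have hfg : f (Z ω') = g ω' := by
        by_contra hcon
        exact h1 (subset_toMeasurable μ _ hcon)
      rw [← hfg, hZω']
    have : F z = f z := by
      rw [hFdef]
      simp only []
      rw [integral_congr_ae hconst, integral_const]
      simp
    exact this.symm
  have hae : ∀ᵐ z ∂μ.map Z, f z = F z := by
    have h0 : μ.map Z Gᶜ = 0 := by
      rw [Measure.map_apply hZ hGm.compl]
      rw [ae_iff] at hG1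
      exact hG1
    rw [ae_iff]
    exact measure_mono_null (fun z hz hmem => hz (hfF z hmem)) h0
  exact hF.congr (hae.mono fun z h => h.symm)

end Upgrade

section CI

variable {Ω : Type*} [MeasurableSpace Ω] [StandardBorelSpace Ω] [Nonempty Ω]
  {𝒳 : Type*} [MeasurableSpace 𝒳] {M : Type*} [MeasurableSpace M]
  {𝒴 : Type*} [MeasurableSpace 𝒴] [StandardBorelSpace 𝒴] [Nonempty 𝒴]
  {μ : Measure Ω} [IsProbabilityMeasure μ]

lemma condDistrib_prod_ae_eq_condDistrib_fst
    {X : Ω → 𝒳} {Q : Ω → M} {Y : Ω → 𝒴}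
    (hX : Measurable X) (hQ : Measurable Q) (hY : Measurable Y)
    (hCI : CondIndepFun (MeasurableSpace.comap X inferInstance) hX.comap_le Y Q μ) :
    ∀ᵐ ω ∂μ, condDistrib Y (fun ω' => (X ω', Q ω')) μ (X ω, Q ω)
      = condDistrib Y X μ (X ω) := by
  set W : Ω → 𝒳 × M := fun ω => (X ω, Q ω) with hW_def
  have hW : Measurable W := hX.prodMk hQ
  set κ' : Kernel (𝒳 × M) 𝒴 := (condDistrib Y X μ).comap Prod.fst measurable_fst with hκ'def
  haveI : IsMarkovKernel κ' := by
    constructor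
    intro w
    rw [hκ'def, Kernel.comap_apply]
    infer_instance
  have key : ∀ {s : Set 𝒳} {u : Set M} {t : Set 𝒴}, MeasurableSet s → MeasurableSet u →
      MeasurableSet t →
      μ (X ⁻¹' s ∩ Q ⁻¹' u ∩ Y ⁻¹' t)
        = ∫⁻ ω in X ⁻¹' s ∩ Q ⁻¹' u, condDistrib Y X μ (X ω) t ∂μ := by
    intro s u t hs hu ht
    have hm := hX.comap_le
    set c : Ω → ℝ := fun ω => (condDistrib Y X μ (X ω) t).toReal with hc_def
    have hc_eq : c =ᵐ[μ] μ⟦Y ⁻¹' t | MeasurableSpace.comap X inferInstance⟧ := condDistrib_ae_eq_condExp hX hY ht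
    have hc_measm : Measurable[MeasurableSpace.comap X inferInstance] c :=
      @Measurable.ennreal_toReal _ (MeasurableSpace.comap X inferInstance) _ (measurable_condDistrib ht)
    have hc_sm : StronglyMeasurable[MeasurableSpace.comap X inferInstance] c := hc_measm.stronglyMeasurable
    have hc_meas : Measurable c := hc_measm.mono hm le_rfl
    have hc_bound : ∀ ω, ‖c ω‖ ≤ 1 := by
      intro ω
      rw [Real.norm_eq_abs, abs_of_nonneg ENNReal.toReal_nonneg]
      have := ENNReal.toReal_mono (a := condDistrib Y X μ (X ω) t) (b := 1) (by simp)
        prob_le_one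
      simpa using this
    have hbdd_int : ∀ {h : Ω → ℝ}, Measurable h → (∀ ω, ‖h ω‖ ≤ 1) → Integrable h μ :=
      fun hh hb => ((integrable_const (1:ℝ) : Integrable _ μ)).mono'
        hh.aestronglyMeasurable (ae_of_all _ hb)
    have hXs : MeasurableSet[MeasurableSpace.comap X inferInstance] (X ⁻¹' s) := ⟨s, hs, rfl⟩
    set IQ : Ω → ℝ := (Q ⁻¹' u).indicator (fun _ => (1:ℝ)) with hIQ_def
    have hIQ_meas : Measurable IQ := measurable_const.indicator (hQ hu)
    have hIQ_bound : ∀ ω, ‖IQ ω‖ ≤ 1 := by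
      intro ω
      rw [hIQ_def]
      by_cases h : ω ∈ Q ⁻¹' u <;> simp [Set.indicator_apply, h]
    set IYQ : Ω → ℝ := (Y ⁻¹' t ∩ Q ⁻¹' u).indicator (fun _ => (1:ℝ)) with hIYQ_def
    have hIYQ_meas : Measurable IYQ := measurable_const.indicator ((hY ht).inter (hQ hu))
    have hIYQ_bound : ∀ ω, ‖IYQ ω‖ ≤ 1 := by
      intro ω
      rw [hIYQ_def]
      by_cases h : ω ∈ Y ⁻¹' t ∩ Q ⁻¹' u <;> simp [Set.indicator_apply, h]
    have hmul : (Q ⁻¹' u).indicator c = c * IQ := by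
      funext ω
      rw [hIQ_def]
      by_cases h : ω ∈ Q ⁻¹' u <;> simp [Set.indicator_apply, h]
    have hmul_meas : Measurable (c * IQ) := hc_meas.mul hIQ_meas
    have hmul_bound : ∀ ω, ‖(c * IQ) ω‖ ≤ 1 := by
      intro ω
      calc ‖c ω * IQ ω‖ = ‖c ω‖ * ‖IQ ω‖ := norm_mul _ _
        _ ≤ 1 * 1 := mul_le_mul (hc_bound ω) (hIQ_bound ω) (norm_nonneg _)
            (le_trans (norm_nonneg _) (hc_bound ω))
        _ = 1 := one_mul 1
    have hCI' := (condIndepFun_iff_condExp_inter_preimage_eq_mul hY hQ).mp hCI t u ht hu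
    have hpull := condExp_mul_of_stronglyMeasurable_left (μ := μ) (m := MeasurableSpace.comap X inferInstance) hc_sm
      (hbdd_int hmul_meas hmul_bound) (hbdd_int hIQ_meas hIQ_bound)
    have hreal : (μ (X ⁻¹' s ∩ (Y ⁻¹' t ∩ Q ⁻¹' u))).toReal
        = ∫ ω in X ⁻¹' s ∩ Q ⁻¹' u, c ω ∂μ := by
      have e1 : (μ (X ⁻¹' s ∩ (Y ⁻¹' t ∩ Q ⁻¹' u))).toReal = ∫ ω in X ⁻¹' s, IYQ ω ∂μ := by
        rw [hIYQ_def, setIntegral_indicator ((hY ht).inter (hQ hu)), setIntegral_const,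
          smul_eq_mul, mul_one, measureReal_def]
      have e2 : ∫ ω in X ⁻¹' s, IYQ ω ∂μ = ∫ ω in X ⁻¹' s, (μ[IYQ|MeasurableSpace.comap X inferInstance]) ω ∂μ :=
        (setIntegral_condExp hm (hbdd_int hIYQ_meas hIYQ_bound) hXs).symm
      have e3 : ∫ ω in X ⁻¹' s, (μ[IYQ|MeasurableSpace.comap X inferInstance]) ω ∂μ = ∫ ω in X ⁻¹' s, (μ[c * IQ|MeasurableSpace.comap X inferInstance]) ω ∂μ := by
        refine integral_congr_ae (ae_restrict_of_ae ?_)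
        filter_upwards [hCI', hpull, hc_eq] with ω h1 h2 h3
        rw [hIYQ_def]
        show (μ⟦Y ⁻¹' t ∩ Q ⁻¹' u|MeasurableSpace.comap X inferInstance⟧) ω = (μ[c * IQ|MeasurableSpace.comap X inferInstance]) ω
        rw [h1, h2, Pi.mul_apply, ← h3]
      have e4 : ∫ ω in X ⁻¹' s, (μ[c * IQ|MeasurableSpace.comap X inferInstance]) ω ∂μ = ∫ ω in X ⁻¹' s, (c * IQ) ω ∂μ :=
        setIntegral_condExp hm (hbdd_int hmul_meas hmul_bound) hXs
      have e5 : ∫ ω in X ⁻¹' s, (c * IQ) ω ∂μ = ∫ ω in X ⁻¹' s ∩ Q ⁻¹' u, c ω ∂μ := by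
        rw [← hmul, setIntegral_indicator (hQ hu)]
      exact e1.trans (e2.trans (e3.trans (e4.trans e5)))
    have hL_ne : ∫⁻ ω in X ⁻¹' s ∩ Q ⁻¹' u, condDistrib Y X μ (X ω) t ∂μ ≠ ⊤ := by
      have hle : ∫⁻ ω in X ⁻¹' s ∩ Q ⁻¹' u, condDistrib Y X μ (X ω) t ∂μ
          ≤ ∫⁻ _ in X ⁻¹' s ∩ Q ⁻¹' u, 1 ∂μ := lintegral_mono fun ω => prob_le_one
      rw [setLIntegral_one] at hle
      exact ne_of_lt (lt_of_le_of_lt hle (measure_lt_top μ _))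
    have htoReal : ∫ ω in X ⁻¹' s ∩ Q ⁻¹' u, c ω ∂μ
        = (∫⁻ ω in X ⁻¹' s ∩ Q ⁻¹' u, condDistrib Y X μ (X ω) t ∂μ).toReal := by
      rw [hc_def]
      exact integral_toReal
        (((measurable_condDistrib ht).mono hm le_rfl).aemeasurable.restrict)
        (ae_of_all _ fun ω => measure_lt_top _ _)
    have hset : X ⁻¹' s ∩ Q ⁻¹' u ∩ Y ⁻¹' t = X ⁻¹' s ∩ (Y ⁻¹' t ∩ Q ⁻¹' u) := by
      rw [Set.inter_assoc, Set.inter_comm (Q ⁻¹' u)]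
    rw [hset]
    refine (ENNReal.toReal_eq_toReal_iff' (measure_ne_top μ _) hL_ne).mp ?_
    exact hreal.trans htoReal
  have main : μ.map (fun ω => (W ω, Y ω)) = μ.map W ⊗ₘ κ' := by
    haveI : IsProbabilityMeasure (μ.map W) := Measure.isProbabilityMeasure_map hW.aemeasurable
    haveI : IsProbabilityMeasure (μ.map (fun ω => (W ω, Y ω))) :=
      Measure.isProbabilityMeasure_map (hW.prodMk hY).aemeasurable
    refine ext_of_generate_finite
      (Set.image2 (· ×ˢ ·)
        (Set.image2 (· ×ˢ ·) {s : Set 𝒳 | MeasurableSet s} {u : Set M | MeasurableSet u})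
        {t : Set 𝒴 | MeasurableSet t}) ?_ ?_ ?_ ?_
    · exact (generateFrom_eq_prod
        (generateFrom_eq_prod MeasurableSpace.generateFrom_measurableSet
          MeasurableSpace.generateFrom_measurableSet
          isCountablySpanning_measurableSet isCountablySpanning_measurableSet)
        MeasurableSpace.generateFrom_measurableSet
        (isCountablySpanning_measurableSet.prod isCountablySpanning_measurableSet)
        isCountablySpanning_measurableSet).symm
    · exact IsPiSystem.prod
        (IsPiSystem.prod (fun _ hs _ ht _ => hs.inter ht) (fun _ hs _ ht _ => hs.inter ht))
        (fun _ hs _ ht _ => hs.inter ht)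
    · rintro _ ⟨A, hA, t, ht, rfl⟩
      obtain ⟨s, hs, u, hu, rfl⟩ := hA
      rw [Measure.map_apply (hW.prodMk hY) ((hs.prod hu).prod ht),
        Measure.compProd_apply_prod (hs.prod hu) ht]
      have hpre : (fun ω => (W ω, Y ω)) ⁻¹' ((s ×ˢ u) ×ˢ t)
          = X ⁻¹' s ∩ Q ⁻¹' u ∩ Y ⁻¹' t := by
        ext ω
        simp only [hW_def, Set.mem_preimage, Set.mem_prod, Set.mem_inter_iff]
        try tauto
      rw [hpre, key hs hu ht, setLIntegral_map (hs.prod hu) (Kernel.measurable_coe κ' ht) hW]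
      have hpre2 : W ⁻¹' (s ×ˢ u) = X ⁻¹' s ∩ Q ⁻¹' u := by
        ext ω
        simp [hW_def]
      rw [hpre2]
      refine setLIntegral_congr_fun ((hX hs).inter (hQ hu)) (fun ω _ => ?_)
      simp [hκ'def, Kernel.comap_apply, hW_def]
    · simp
  have h := condDistrib_ae_eq_of_measure_eq_compProd W hY.aemeasurable main
  have h2 := ae_of_ae_map hW.aemeasurable h
  filter_upwards [h2] with ω hω
  have : κ' (W ω) = condDistrib Y X μ (X ω) := by rw [hκ'def, Kernel.comap_apply]
  rw [← this, hω]

end CI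

/-- **Calibration–sharpness decomposition.**
For a strictly proper scoring rule `S` and jointly distributed feature `X`, target `Y` and
probabilistic prediction `Q` (a random probability measure on the target space) such that
`Y` and `Q` are conditionally independent given `X`,
`E[S(Q,Y)] = E[d(P_{Y|Q}, Q)] + I(Y; X | Q) + E[H(P_{Y|X})]`. -/
theorem calibration_sharpness_decomposition
    {Ω 𝒳 𝒴 : Type*} [MeasurableSpace Ω] [StandardBorelSpace Ω] [Nonempty Ω]
    [MeasurableSpace 𝒳] [MeasurableSpace 𝒴] [StandardBorelSpace 𝒴] [Nonempty 𝒴]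
    (μ : Measure Ω) [IsProbabilityMeasure μ]
    (S : Measure 𝒴 → 𝒴 → ℝ) (hS : IsStrictlyProper S)
    (X : Ω → 𝒳) (Y : Ω → 𝒴) (Q : Ω → Measure 𝒴)
    (hX : Measurable X) (hY : Measurable Y) (hQ : Measurable Q)
    (hQprob : ∀ ω, IsProbabilityMeasure (Q ω))
    -- `Y` and `Q` are conditionally independent given `X`
    (hCI : CondIndepFun (MeasurableSpace.comap X inferInstance) hX.comap_le Y Q μ)
    -- all integrals appearing are assumed to be well defined and finite
    (hint_score : Integrable (fun ω => S (Q ω) (Y ω)) μ)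
    (hint_div : Integrable (fun ω => gDiv S (condDistrib Y Q μ (Q ω)) (Q ω)) μ)
    (hint_entQ : Integrable (fun ω => gEntropy S (condDistrib Y Q μ (Q ω))) μ)
    (hint_entXQ : Integrable
      (fun ω => gEntropy S (condDistrib Y (fun ω' => (X ω', Q ω')) μ (X ω, Q ω))) μ)
    (hint_entX : Integrable (fun ω => gEntropy S (condDistrib Y X μ (X ω))) μ) :
    ∫ ω, S (Q ω) (Y ω) ∂μ
      = ∫ ω, gDiv S (condDistrib Y Q μ (Q ω)) (Q ω) ∂μ
        + gCondMutualInfo S μ Y X Q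
        + ∫ ω, gEntropy S (condDistrib Y X μ (X ω)) ∂μ := by

  -- Step 3 : tower property for the expected score
  have hf : AEStronglyMeasurable (fun z : Measure 𝒴 × 𝒴 => S z.1 z.2)
      (μ.map (fun ω => (Q ω, Y ω))) :=
    aesm_pair_of_comp hQ hY hQprob (f := fun z : Measure 𝒴 × 𝒴 => S z.1 z.2) hint_score.1
  have hce := condExp_prod_ae_eq_integral_condDistrib₀ (X := Q) (Y := Y)
      (f := fun z : Measure 𝒴 × 𝒴 => S z.1 z.2) hQ hY.aemeasurable hf hint_score
  have hLHS : ∫ ω, S (Q ω) (Y ω) ∂μ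
      = ∫ ω, ∫ y, S (Q ω) y ∂(condDistrib Y Q μ (Q ω)) ∂μ := by
    calc ∫ ω, S (Q ω) (Y ω) ∂μ
        = ∫ ω, (μ[(fun a => (fun z : Measure 𝒴 × 𝒴 => S z.1 z.2) (Q a, Y a))|
            MeasurableSpace.comap Q inferInstance]) ω ∂μ :=
          (integral_condExp hQ.comap_le).symm
      _ = ∫ ω, ∫ y, (fun z : Measure 𝒴 × 𝒴 => S z.1 z.2) (Q ω, y)
            ∂(condDistrib Y Q μ (Q ω)) ∂μ := integral_congr_ae hce
      _ = ∫ ω, ∫ y, S (Q ω) y ∂(condDistrib Y Q μ (Q ω)) ∂μ := rfl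
  -- Step 2 : conditional independence kills the mutual information term
  have hstep2 := condDistrib_prod_ae_eq_condDistrib_fst hX hQ hY hCI
  have hgcmi : gCondMutualInfo S μ Y X Q
      = ∫ ω, gEntropy S (condDistrib Y Q μ (Q ω)) ∂μ
        - ∫ ω, gEntropy S (condDistrib Y (fun ω' => (X ω', Q ω')) μ (X ω, Q ω)) ∂μ := by
    unfold gCondMutualInfo
    exact integral_sub hint_entQ hint_entXQ
  have hXQeq : ∫ ω, gEntropy S (condDistrib Y (fun ω' => (X ω', Q ω')) μ (X ω, Q ω)) ∂μ
      = ∫ ω, gEntropy S (condDistrib Y X μ (X ω)) ∂μ := by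
    refine integral_congr_ae ?_
    filter_upwards [hstep2] with ω hω
    rw [hω]
  -- Step 1 : algebra
  have hsum : ∫ ω, gDiv S (condDistrib Y Q μ (Q ω)) (Q ω) ∂μ
      + ∫ ω, gEntropy S (condDistrib Y Q μ (Q ω)) ∂μ
      = ∫ ω, ∫ y, S (Q ω) y ∂(condDistrib Y Q μ (Q ω)) ∂μ := by
    rw [← integral_add hint_div hint_entQ]
    refine integral_congr_ae (ae_of_all _ fun ω => ?_)
    simp [gDiv]
  rw [hLHS, hgcmi, hXQeq]
  linarith [hsum]
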